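/- Assume Re(ν) > 0 and let ψ: (0,∞) → V be continuous, satisfy the Lewis equation at every x > 0, and satisfy ψ(x) → 0 as x → ∞. Then ψ is an eigenfunction with eigenvalue 1 of the transfer operator at ∞, i.e. for every x > 0 one has ψ(x) = Σ_{n=1}^∞ (n+x)^{−2ν−1}·η(T'T^{n−1})^{−1}(ψ(1 − 1/(n+x))). -/

import Mathlib

open Complex

/-- `SL₂(ℤ)`. -/
abbrev SL2Z := Matrix.SpecialLinearGroup (Fin 2) ℤ

/-- The matrix `T = [[1,1],[0,1]]`. -/
def Tm : SL2Z := ⟨!![1, 1; 0, 1], by norm_num [Matrix.det_fin_two_of]⟩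

/-- The matrix `S = [[0,1],[−1,0]]`. -/
def Sm : SL2Z := ⟨!![0, 1; -1, 0], by norm_num [Matrix.det_fin_two_of]⟩

/-- The matrix `T' = [[1,0],[1,1]]`. -/
def Tm' : SL2Z := ⟨!![1, 0; 1, 1], by norm_num [Matrix.det_fin_two_of]⟩

/-- The matrix `−I`. -/
def negI : SL2Z := ⟨!![-1, 0; 0, -1], by norm_num [Matrix.det_fin_two_of]⟩

/-- `ψ : (0,∞) → V` satisfies the Lewis equation with parameter `ν` at `x`. -/
def LewisEqR {V : Type*} [NormedAddCommGroup V] [NormedSpace ℂ V]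
    (η : SL2Z →* Module.End ℂ V) (ν : ℂ) (ψ : ℝ → V) (x : ℝ) : Prop :=
  η Tm (ψ x) =
    ψ (x + 1) +
      ((((x : ℂ) + 1)) ^ (-2 * ν - 1)) • η (Sm * Tm⁻¹) (ψ (x / (x + 1)))

lemma TST_aux : Tm⁻¹ * Sm * Tm⁻¹ = Tm'⁻¹ := by
  ext i j
  fin_cases i <;> fin_cases j <;> decide

set_option maxHeartbeats 1000000 in
/-- If `Re(ν) > 0`, `ψ` is continuous on `(0,∞)`, satisfies the Lewis equation
there, and `ψ(x) → 0` as `x → ∞`, then `ψ` is an eigenfunction with eigenvalue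
`1` of the transfer operator at `∞`. -/
theorem stmt14 {V : Type*} [NormedAddCommGroup V] [NormedSpace ℂ V]
    [FiniteDimensional ℂ V] [Nontrivial V]
    (η : SL2Z →* Module.End ℂ V) (hη : η negI = 1)
    (N : ℕ) (hN : 0 < N) (hord : η Tm ^ N = 1)
    (ν : ℂ) (hν : 0 < ν.re)
    (ψ : ℝ → V) (hψcont : ContinuousOn ψ (Set.Ioi (0 : ℝ)))
    (hψlewis : ∀ x : ℝ, 0 < x → LewisEqR η ν ψ x)
    (hψinf : Filter.Tendsto ψ Filter.atTop (nhds 0)) :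
    ∀ x : ℝ, 0 < x →
      ψ x = ∑' n : ℕ, (((((n : ℝ) + 1 + x : ℝ) : ℂ)) ^ (-2 * ν - 1)) •
          η ((Tm' * Tm ^ n)⁻¹) (ψ (1 - 1 / ((n : ℝ) + 1 + x))) := by
  haveI : CompleteSpace V := FiniteDimensional.complete ℂ V
  intro x hx
  set f : ℕ → V := fun n => (((((n : ℝ) + 1 + x : ℝ) : ℂ)) ^ (-2 * ν - 1)) •
      η ((Tm' * Tm ^ n)⁻¹) (ψ (1 - 1 / ((n : ℝ) + 1 + x))) with hf
  -- basic algebra facts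
  have hinv1 : (η Tm⁻¹) * (η Tm) = 1 := by
    rw [← map_mul, inv_mul_cancel, map_one]
  have hinvN : (η Tm⁻¹) ^ N = 1 := by
    have h : (η Tm⁻¹) ^ N * (η Tm) ^ N = 1 := by
      rw [← map_pow, ← map_pow, ← map_mul, inv_pow, inv_mul_cancel, map_one]
    rwa [hord, mul_one] at h
  have hper : ∀ k : ℕ, (η Tm⁻¹) ^ k = (η Tm⁻¹) ^ (k % N) := by
    intro k
    conv_lhs => rw [← Nat.div_add_mod k N]
    rw [pow_add, pow_mul, hinvN, one_pow, one_mul]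
  -- uniform bound on powers of η Tm⁻¹
  obtain ⟨C₀, hC₀nn, hC₀⟩ : ∃ C : ℝ, 0 ≤ C ∧
      ∀ (k : ℕ) (v : V), ‖((η Tm⁻¹) ^ k) v‖ ≤ C * ‖v‖ := by
    have hNne : (Finset.range N).Nonempty := ⟨0, Finset.mem_range.mpr hN⟩
    set g : ℕ → ℝ := fun j =>
      ‖LinearMap.toContinuousLinearMap ((η Tm⁻¹) ^ j : Module.End ℂ V)‖ with hg
    refine ⟨(Finset.range N).sup' hNne g, ?_, ?_⟩
    · exact le_trans (norm_nonneg _) (Finset.le_sup' g (Finset.mem_range.mpr hN))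
    · intro k v
      have h1 : ‖((η Tm⁻¹) ^ k) v‖ =
          ‖(LinearMap.toContinuousLinearMap ((η Tm⁻¹) ^ (k % N) : Module.End ℂ V)) v‖ := by
        rw [hper k]; rfl
      rw [h1]
      calc ‖(LinearMap.toContinuousLinearMap ((η Tm⁻¹) ^ (k % N) : Module.End ℂ V)) v‖
          ≤ g (k % N) * ‖v‖ := ContinuousLinearMap.le_opNorm _ v
        _ ≤ (Finset.range N).sup' hNne g * ‖v‖ :=
            mul_le_mul_of_nonneg_right
              (Finset.le_sup' g (Finset.mem_range.mpr (Nat.mod_lt k hN))) (norm_nonneg v)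
  -- bound on η Tm'⁻¹
  obtain ⟨C₁, hC₁nn, hC₁⟩ : ∃ C : ℝ, 0 ≤ C ∧ ∀ v : V, ‖(η Tm'⁻¹) v‖ ≤ C * ‖v‖ := by
    refine ⟨‖LinearMap.toContinuousLinearMap (η Tm'⁻¹ : Module.End ℂ V)‖, norm_nonneg _,
      fun v => ?_⟩
    have h1 : ‖(η Tm'⁻¹) v‖ =
        ‖(LinearMap.toContinuousLinearMap (η Tm'⁻¹ : Module.End ℂ V)) v‖ := rfl
    rw [h1]
    exact (LinearMap.toContinuousLinearMap (η Tm'⁻¹ : Module.End ℂ V)).le_opNorm v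
  -- bound on ψ on the relevant compact set
  obtain ⟨M, hM⟩ : ∃ M : ℝ, ∀ y ∈ Set.Icc (x / (x + 1)) 1, ‖ψ y‖ ≤ M := by
    have hcpt : IsCompact (Set.Icc (x / (x + 1)) 1) := isCompact_Icc
    have hsub : Set.Icc (x / (x + 1)) 1 ⊆ Set.Ioi (0 : ℝ) := by
      intro y hy
      have : (0:ℝ) < x / (x + 1) := by positivity
      exact lt_of_lt_of_le this hy.1
    exact hcpt.exists_bound_of_continuousOn (hψcont.mono hsub)
  have hMnn : 0 ≤ M := by
    have hmem : (1:ℝ) ∈ Set.Icc (x / (x + 1)) 1 := by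
      constructor
      · rw [div_le_one (by linarith)]; linarith
      · exact le_refl 1
    exact le_trans (norm_nonneg _) (hM 1 hmem)
  -- argument membership
  have harg : ∀ n : ℕ, (1 - 1 / ((n : ℝ) + 1 + x)) ∈ Set.Icc (x / (x + 1)) 1 := by
    intro n
    have hpos : (0:ℝ) < (n : ℝ) + 1 + x := by positivity
    constructor
    · have h1 : 1 / ((n : ℝ) + 1 + x) ≤ 1 / (x + 1) :=
        one_div_le_one_div_of_le (by linarith) (by linarith)
      have h2 : x / (x + 1) = 1 - 1 / (x + 1) := by
        field_simp
        ring
      rw [h2]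
      linarith
    · have : 0 ≤ 1 / ((n : ℝ) + 1 + x) := by positivity
      linarith
  -- decomposition of the operator in each term
  have hop : ∀ n : ℕ, (η ((Tm' * Tm ^ n)⁻¹) : Module.End ℂ V) =
      ((η Tm⁻¹) ^ n) * (η Tm'⁻¹) := by
    intro n
    rw [mul_inv_rev, map_mul, ← inv_pow, map_pow]
  -- norm bound on f
  have hfb : ∀ n : ℕ, ‖f n‖ ≤ (C₀ * C₁ * M) * ((n : ℝ) + 1) ^ ((-2 * ν - 1).re) := by
    intro n
    have hpos : (0:ℝ) < (n : ℝ) + 1 + x := by positivity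
    have hsc : ‖((((n : ℝ) + 1 + x : ℝ) : ℂ)) ^ (-2 * ν - 1)‖ =
        ((n : ℝ) + 1 + x) ^ ((-2 * ν - 1).re) := by
      rw [Complex.norm_cpow_eq_rpow_re_of_pos hpos]
    have hvec : ‖η ((Tm' * Tm ^ n)⁻¹) (ψ (1 - 1 / ((n : ℝ) + 1 + x)))‖ ≤ C₀ * C₁ * M := by
      rw [hop n]
      calc ‖((η Tm⁻¹) ^ n) ((η Tm'⁻¹) (ψ (1 - 1 / ((n : ℝ) + 1 + x))))‖
          ≤ C₀ * ‖(η Tm'⁻¹) (ψ (1 - 1 / ((n : ℝ) + 1 + x)))‖ := hC₀ n _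
        _ ≤ C₀ * (C₁ * ‖ψ (1 - 1 / ((n : ℝ) + 1 + x))‖) :=
            mul_le_mul_of_nonneg_left (hC₁ _) hC₀nn
        _ ≤ C₀ * (C₁ * M) :=
            mul_le_mul_of_nonneg_left
              (mul_le_mul_of_nonneg_left (hM _ (harg n)) hC₁nn) hC₀nn
        _ = C₀ * C₁ * M := by ring
    have hrp : ((n : ℝ) + 1 + x) ^ ((-2 * ν - 1).re) ≤ ((n : ℝ) + 1) ^ ((-2 * ν - 1).re) := by
      apply Real.rpow_le_rpow_of_nonpos (by positivity) (by linarith)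
      have : (-2 * ν - 1).re = -2 * ν.re - 1 := by
        simp [Complex.sub_re, Complex.mul_re]
      rw [this]
      nlinarith [hν]
    calc ‖f n‖ = ‖((((n : ℝ) + 1 + x : ℝ) : ℂ)) ^ (-2 * ν - 1)‖ *
        ‖η ((Tm' * Tm ^ n)⁻¹) (ψ (1 - 1 / ((n : ℝ) + 1 + x)))‖ := norm_smul _ _
      _ ≤ ((n : ℝ) + 1 + x) ^ ((-2 * ν - 1).re) * (C₀ * C₁ * M) := by
          rw [hsc]
          exact mul_le_mul_of_nonneg_left hvec (Real.rpow_nonneg hpos.le _)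
      _ ≤ ((n : ℝ) + 1) ^ ((-2 * ν - 1).re) * (C₀ * C₁ * M) :=
          mul_le_mul_of_nonneg_right hrp (by positivity)
      _ = (C₀ * C₁ * M) * ((n : ℝ) + 1) ^ ((-2 * ν - 1).re) := by ring
  -- summability
  have hre : (-2 * ν - 1).re < -1 := by
    have : (-2 * ν - 1).re = -2 * ν.re - 1 := by
      simp [Complex.sub_re, Complex.mul_re]
    rw [this]
    nlinarith [hν]
  have hsummaj : Summable (fun n : ℕ => (C₀ * C₁ * M) * ((n : ℝ) + 1) ^ ((-2 * ν - 1).re)) := by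
    apply Summable.mul_left
    have := (Real.summable_nat_rpow (p := (-2 * ν - 1).re)).mpr hre
    have h2 := (summable_nat_add_iff 1).mpr this
    simpa using h2
  have hsum : Summable f := Summable.of_norm_bounded hsummaj hfb
  -- telescoping identity
  have key : ∀ k : ℕ, ψ x = (η (Tm⁻¹ ^ k)) (ψ (x + k)) + ∑ n ∈ Finset.range k, f n := by
    intro k
    induction k with
    | zero => simp
    | succ k ih =>
      have hxk : (0:ℝ) < x + k := by positivity
      have hl := hψlewis (x + k) hxk
      unfold LewisEqR at hl
      have h2 : ψ (x + k) = (η Tm⁻¹) (ψ (x + k + 1)) +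
          ((((x + k : ℝ) : ℂ) + 1) ^ (-2 * ν - 1)) •
            (η (Tm⁻¹ * (Sm * Tm⁻¹))) (ψ ((x + k) / (x + k + 1))) := by
        have h3 := congrArg (η Tm⁻¹) hl
        simp only [map_add, map_smul] at h3
        have h4 : (η Tm⁻¹) ((η Tm) (ψ (x + k))) = ψ (x + k) := by
          have h := congrFun (congrArg (fun e : Module.End ℂ V => (e : V → V)) hinv1) (ψ (x + k))
          simpa using h
        rw [h4] at h3
        rw [h3]
        simp only [map_mul, Module.End.mul_apply]
      have hco : ((((x + k : ℝ) : ℂ) + 1) ^ (-2 * ν - 1)) =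
          (((((k : ℝ) + 1 + x : ℝ)) : ℂ) ^ (-2 * ν - 1)) := by
        congr 1
        push_cast
        ring
      have hargk : (x + k) / (x + k + 1) = 1 - 1 / ((k : ℝ) + 1 + x) := by
        have hne : (x + (k:ℝ) + 1) ≠ 0 := by positivity
        have hne2 : ((k:ℝ) + 1 + x) ≠ 0 := by positivity
        field_simp
        ring
      have hopk : (Tm⁻¹ ^ k) * (Tm⁻¹ * (Sm * Tm⁻¹)) = (Tm' * Tm ^ k)⁻¹ := by
        rw [show Tm⁻¹ * (Sm * Tm⁻¹) = Tm⁻¹ * Sm * Tm⁻¹ by rw [mul_assoc], TST_aux,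
          mul_inv_rev, inv_pow]
      have h5 : (η (Tm⁻¹ ^ k)) ((η Tm⁻¹) (ψ (x + k + 1))) =
          (η (Tm⁻¹ ^ (k+1))) (ψ (x + ((k : ℕ)+1 : ℕ))) := by
        rw [pow_succ, map_mul]
        have hc : x + (k:ℝ) + 1 = x + (((k : ℕ)+1 : ℕ) : ℝ) := by push_cast; ring
        rw [hc, Module.End.mul_apply]
      have h7 : (η (Tm⁻¹ ^ k)) ((η (Tm⁻¹ * (Sm * Tm⁻¹))) (ψ ((x + k) / (x + k + 1)))) =
          (η ((Tm⁻¹ ^ k) * (Tm⁻¹ * (Sm * Tm⁻¹)))) (ψ ((x + k) / (x + k + 1))) := by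
        simp only [map_mul, Module.End.mul_apply]
      have h6 : ((((x + k : ℝ) : ℂ) + 1) ^ (-2 * ν - 1)) •
          (η (Tm⁻¹ ^ k)) ((η (Tm⁻¹ * (Sm * Tm⁻¹))) (ψ ((x + k) / (x + k + 1)))) = f k := by
        rw [h7, hopk, hargk, hco, hf]
      have hstep : (η (Tm⁻¹ ^ k)) (ψ (x + k)) =
          (η (Tm⁻¹ ^ (k+1))) (ψ (x + ((k : ℕ)+1 : ℕ))) + f k := by
        rw [h2, map_add, map_smul, h5, h6]
      rw [ih, hstep, Finset.sum_range_succ]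
      abel
  -- the remainder tends to zero
  have htend : Filter.Tendsto (fun k : ℕ => x + (k : ℝ)) Filter.atTop Filter.atTop :=
    Filter.tendsto_atTop_add_const_left _ x tendsto_natCast_atTop_atTop
  have hrem : Filter.Tendsto (fun k : ℕ => (η (Tm⁻¹ ^ k)) (ψ (x + k)))
      Filter.atTop (nhds 0) := by
    have hb : ∀ k : ℕ, ‖(η (Tm⁻¹ ^ k)) (ψ (x + k))‖ ≤ C₀ * ‖ψ (x + k)‖ := by
      intro k
      have : (η (Tm⁻¹ ^ k) : Module.End ℂ V) = (η Tm⁻¹) ^ k := map_pow η Tm⁻¹ k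
      rw [this]
      exact hC₀ k _
    have hz : Filter.Tendsto (fun k : ℕ => C₀ * ‖ψ (x + k)‖) Filter.atTop (nhds 0) := by
      have h1 : Filter.Tendsto (fun k : ℕ => ψ (x + k)) Filter.atTop (nhds 0) :=
        hψinf.comp htend
      have h2 := h1.norm
      simp only [norm_zero] at h2
      simpa using h2.const_mul C₀
    exact squeeze_zero_norm hb hz
  -- conclude
  have h1 : Filter.Tendsto (fun k => ∑ n ∈ Finset.range k, f n) Filter.atTop (nhds (ψ x)) := by
    have heq : (fun k => ∑ n ∈ Finset.range k, f n) =
        fun k : ℕ => ψ x - (η (Tm⁻¹ ^ k)) (ψ (x + (k : ℝ))) := by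
      funext k
      have := key k
      rw [this]
      abel
    rw [heq]
    have hc : Filter.Tendsto (fun _ : ℕ => ψ x) Filter.atTop (nhds (ψ x)) :=
      tendsto_const_nhds
    simpa using hc.sub hrem
  have h2 := hsum.hasSum.tendsto_sum_nat
  exact tendsto_nhds_unique h1 h2
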